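/- Let d ≥ 1 and let j : (0,∞) → [0,∞) be nonincreasing with ∫_{ℝ^d} min{1,|x|²} j(|x|) dx < ∞. Suppose there exist c₀ > 0 and R₀ > 0 with j(r) ≥ c₀·r^{−d−2} for all r ≥ R₀, and there exist c, R, α > 0 such that r^{d+2}·j(r) ≥ c·(r/s)^α·s^{d+2}·j(s) for all R ≤ s ≤ r. Then there exist C > 0 and R₁ > 0 such that m₂(r) ≤ C·r^{d+2}·j(r) for all r ≥ R₁. -/

import Mathlib

open MeasureTheory Metric ENNReal
set_option maxHeartbeats 1000000

/-- Truncated second moment `m₂(r) = ∫_{B(0,r)} |x|² j(|x|) dx` in `ℝ^d`. -/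
noncomputable def m2 (d : ℕ) (j : ℝ → ℝ) (r : ℝ) : ℝ≥0∞ :=
  ∫⁻ x in Metric.ball (0 : EuclideanSpace ℝ (Fin d)) r,
    ENNReal.ofReal (‖x‖ ^ 2 * j ‖x‖)

theorem stmt3 (d : ℕ) (hd : 1 ≤ d) (j : ℝ → ℝ)
    (hnonneg : ∀ r : ℝ, 0 < r → 0 ≤ j r)
    (hmono : AntitoneOn j (Set.Ioi (0 : ℝ)))
    (hLK : (∫⁻ x : EuclideanSpace ℝ (Fin d),
      ENNReal.ofReal (min 1 (‖x‖ ^ 2) * j ‖x‖)) < ⊤)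
    (c₀ R₀ : ℝ) (hc₀ : 0 < c₀) (hR₀ : 0 < R₀)
    (hlow : ∀ r : ℝ, R₀ ≤ r → c₀ * r ^ (-(d : ℝ) - 2) ≤ j r)
    (c R α : ℝ) (hc : 0 < c) (hR : 0 < R) (hα : 0 < α)
    (hscale : ∀ s r : ℝ, R ≤ s → s ≤ r →
      c * (r / s) ^ α * (s ^ (d + 2) * j s) ≤ r ^ (d + 2) * j r) :
    ∃ C R₁ : ℝ, 0 < C ∧ 0 < R₁ ∧ ∀ r : ℝ, R₁ ≤ r →
      m2 d j r ≤ ENNReal.ofReal (C * (r ^ (d + 2) * j r)) := by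
  classical
  haveI : Nonempty (Fin d) := ⟨⟨0, hd⟩⟩
  haveI : Nontrivial (EuclideanSpace ℝ (Fin d)) :=
    inferInstance
  set R₂ : ℝ := max 1 (max R₀ R) with hR₂def
  have hR₂1 : (1:ℝ) ≤ R₂ := le_max_left _ _
  have hR₂pos : (0:ℝ) < R₂ := lt_of_lt_of_le one_pos hR₂1
  have hR₂R₀ : R₀ ≤ R₂ := le_trans (le_max_left _ _) (le_max_right _ _)
  have hR₂R : R ≤ R₂ := le_trans (le_max_right _ _) (le_max_right _ _)
  have hR₂sq : (1:ℝ) ≤ R₂ ^ 2 := by nlinarith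
  set V : ℝ≥0∞ := volume (Metric.ball (0 : EuclideanSpace ℝ (Fin d)) 1) with hVdef
  have hVlt : V < ⊤ := measure_ball_lt_top
  set q : ℝ := (2:ℝ)⁻¹ ^ α with hqdef
  have hq0 : 0 < q := Real.rpow_pos_of_pos (by norm_num) _
  have hq1 : q < 1 := by
    rw [hqdef]; exact Real.rpow_lt_one (by norm_num) (by norm_num) hα
  set I : ℝ≥0∞ := ENNReal.ofReal (R₂ ^ 2) *
    (∫⁻ x : EuclideanSpace ℝ (Fin d), ENNReal.ofReal (min 1 (‖x‖ ^ 2) * j ‖x‖)) with hIdef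
  have hIlt : I < ⊤ := ENNReal.mul_lt_top ofReal_lt_top hLK
  set C₁ : ℝ := I.toReal / c₀ with hC₁def
  set C₂ : ℝ := 2 ^ (d + 2) / c * V.toReal * (1 - q)⁻¹ with hC₂def
  have hC₁0 : 0 ≤ C₁ := div_nonneg ENNReal.toReal_nonneg hc₀.le
  have hC₂0 : 0 ≤ C₂ := by
    apply mul_nonneg (mul_nonneg (div_nonneg (by positivity) hc.le) ENNReal.toReal_nonneg)
    rw [inv_nonneg]; linarith
  refine ⟨C₁ + C₂ + 1, R₂, by linarith, hR₂pos, ?_⟩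
  intro r hr
  have hrpos : 0 < r := lt_of_lt_of_le hR₂pos hr
  set X : ℝ := r ^ (d + 2) * j r with hXdef
  have hjr : c₀ * r ^ (-(d:ℝ) - 2) ≤ j r := hlow r (le_trans hR₂R₀ hr)
  have hXc₀ : c₀ ≤ X := by
    have h1 : r ^ (d + 2) * (c₀ * r ^ (-(d:ℝ) - 2)) ≤ X :=
      mul_le_mul_of_nonneg_left hjr (by positivity)
    have h2 : r ^ (d + 2) * r ^ (-(d:ℝ) - 2) = 1 := by
      rw [← Real.rpow_natCast r (d + 2), ← Real.rpow_add hrpos]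
      norm_num
    calc c₀ = r ^ (d + 2) * (c₀ * r ^ (-(d:ℝ) - 2)) := by
          rw [mul_comm c₀, ← mul_assoc, h2, one_mul]
      _ ≤ X := h1
  have hX0 : 0 ≤ X := le_trans hc₀.le hXc₀
  -- inner part
  have hinner : (∫⁻ x in Metric.ball (0 : EuclideanSpace ℝ (Fin d)) R₂,
      ENNReal.ofReal (‖x‖ ^ 2 * j ‖x‖)) ≤ ENNReal.ofReal (C₁ * X) := by
    have hpt : ∀ x : EuclideanSpace ℝ (Fin d),
        (Metric.ball (0 : EuclideanSpace ℝ (Fin d)) R₂).indicator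
            (fun x => ENNReal.ofReal (‖x‖ ^ 2 * j ‖x‖)) x
          ≤ ENNReal.ofReal (R₂ ^ 2) * ENNReal.ofReal (min 1 (‖x‖ ^ 2) * j ‖x‖) := by
      intro x
      by_cases hx : x ∈ Metric.ball (0 : EuclideanSpace ℝ (Fin d)) R₂
      · rw [Set.indicator_of_mem hx, ← ENNReal.ofReal_mul (by positivity)]
        apply ENNReal.ofReal_le_ofReal
        rcases eq_or_lt_of_le (norm_nonneg x) with h0 | h0
        · rw [← h0]; norm_num
        · have hj : 0 ≤ j ‖x‖ := hnonneg _ h0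
          have hxR : ‖x‖ < R₂ := mem_ball_zero_iff.mp hx
          have hsq : 0 ≤ ‖x‖ ^ 2 * j ‖x‖ := mul_nonneg (by positivity) hj
          rcases le_total (‖x‖ ^ 2) 1 with h1 | h1
          · rw [min_eq_right h1]
            nlinarith [mul_nonneg (sub_nonneg.mpr hR₂sq) hsq]
          · rw [min_eq_left h1]
            have hx2 : ‖x‖ ^ 2 ≤ R₂ ^ 2 := by nlinarith
            nlinarith [mul_le_mul_of_nonneg_right hx2 hj]
      · rw [Set.indicator_of_notMem hx]; exact zero_le
    calc (∫⁻ x in Metric.ball (0 : EuclideanSpace ℝ (Fin d)) R₂,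
          ENNReal.ofReal (‖x‖ ^ 2 * j ‖x‖))
        = ∫⁻ x : EuclideanSpace ℝ (Fin d),
            (Metric.ball (0 : EuclideanSpace ℝ (Fin d)) R₂).indicator
              (fun x => ENNReal.ofReal (‖x‖ ^ 2 * j ‖x‖)) x :=
          (lintegral_indicator measurableSet_ball _).symm
      _ ≤ ∫⁻ x : EuclideanSpace ℝ (Fin d),
            ENNReal.ofReal (R₂ ^ 2) * ENNReal.ofReal (min 1 (‖x‖ ^ 2) * j ‖x‖) :=
          lintegral_mono hpt
      _ = I := by rw [hIdef, lintegral_const_mul' _ _ ofReal_ne_top]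
      _ = ENNReal.ofReal I.toReal := (ENNReal.ofReal_toReal hIlt.ne).symm
      _ ≤ ENNReal.ofReal (C₁ * X) := by
          apply ENNReal.ofReal_le_ofReal
          rw [hC₁def, div_mul_eq_mul_div, le_div_iff₀ hc₀]
          calc I.toReal * c₀ ≤ I.toReal * X :=
                mul_le_mul_of_nonneg_left hXc₀ ENNReal.toReal_nonneg
            _ = _ := by ring
  -- annulus part
  set A : Set (EuclideanSpace ℝ (Fin d)) :=
    {x | R₂ ≤ ‖x‖} ∩ Metric.ball (0 : EuclideanSpace ℝ (Fin d)) r with hAdef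
  set S : ℕ → Set (EuclideanSpace ℝ (Fin d)) := fun k =>
    {x | max R₂ (r * (2:ℝ)⁻¹ ^ (k + 1)) ≤ ‖x‖ ∧ ‖x‖ < r * (2:ℝ)⁻¹ ^ k} with hSdef
  have hcover : A ⊆ ⋃ k, S k := by
    rintro x ⟨hx1, hx2⟩
    simp only [Set.mem_setOf_eq] at hx1
    have hxr : ‖x‖ < r := mem_ball_zero_iff.mp hx2
    have hxpos : 0 < ‖x‖ := lt_of_lt_of_le hR₂pos hx1
    have hex : ∃ n : ℕ, r * (2:ℝ)⁻¹ ^ (n + 1) ≤ ‖x‖ := by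
      obtain ⟨n, hn⟩ := exists_pow_lt_of_lt_one (x := ‖x‖ / r) (y := (2:ℝ)⁻¹)
        (by positivity) (by norm_num)
      refine ⟨n, ?_⟩
      have h1 : r * (2:ℝ)⁻¹ ^ n < ‖x‖ := by
        rw [lt_div_iff₀ hrpos] at hn; linarith [hn]
      have h2 : (2:ℝ)⁻¹ ^ (n + 1) ≤ (2:ℝ)⁻¹ ^ n := by
        rw [pow_succ]
        nlinarith [pow_pos (show (0:ℝ) < 2⁻¹ by norm_num) n]
      nlinarith
    refine Set.mem_iUnion.mpr ⟨Nat.find hex, max_le hx1 (Nat.find_spec hex), ?_⟩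
    by_cases h0 : Nat.find hex = 0
    · rw [h0]; simpa using hxr
    · obtain ⟨m, hm⟩ := Nat.exists_eq_succ_of_ne_zero h0
      have hmin := Nat.find_min hex (show m < Nat.find hex by omega)
      push_neg at hmin
      rw [hm]; exact hmin
  have hterm : ∀ k : ℕ,
      (∫⁻ x in S k, ENNReal.ofReal (‖x‖ ^ 2 * j ‖x‖)) ≤
        ENNReal.ofReal (2 ^ (d + 2) / c * X) * ENNReal.ofReal q ^ k * V := by
    intro k
    set ρ : ℝ := r * (2:ℝ)⁻¹ ^ k with hρ
    set t : ℝ := max R₂ (r * (2:ℝ)⁻¹ ^ (k + 1)) with ht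
    have hρpos : 0 < ρ := by rw [hρ]; positivity
    have htpos : 0 < t := lt_of_lt_of_le hR₂pos (le_max_left _ _)
    have htR₂ : R₂ ≤ t := le_max_left _ _
    have hhalf : r * (2:ℝ)⁻¹ ^ (k + 1) = ρ / 2 := by rw [hρ, pow_succ]; ring
    have hρ2t : ρ ≤ 2 * t := by
      have h := le_max_right R₂ (r * (2:ℝ)⁻¹ ^ (k + 1))
      rw [← ht, hhalf] at h
      linarith
    by_cases hcase : ρ ≤ R₂
    · have hempty : S k = ∅ := by
        ext x
        simp only [hSdef, Set.mem_setOf_eq, Set.mem_empty_iff_false, iff_false, not_and]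
        intro h1
        have hxR : R₂ ≤ ‖x‖ := le_trans (le_max_left _ _) h1
        rw [← hρ]
        push_neg
        linarith
      rw [hempty]
      simp only [Measure.restrict_empty, lintegral_zero_measure]
      exact zero_le
    · push_neg at hcase
      have htρ : t < ρ := by
        rw [ht]
        apply max_lt hcase
        rw [hhalf]; linarith
      have htr : t ≤ r := by
        rw [ht]
        apply max_le hr
        have h1 : (2:ℝ)⁻¹ ^ (k + 1) ≤ 1 := pow_le_one₀ (by norm_num) (by norm_num)
        nlinarith
      have hjt : 0 ≤ j t := hnonneg _ htpos
      have step1 : (∫⁻ x in S k, ENNReal.ofReal (‖x‖ ^ 2 * j ‖x‖)) ≤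
          ENNReal.ofReal (ρ ^ 2 * j t) * volume (S k) := by
        rw [← setLIntegral_const]
        apply setLIntegral_mono measurable_const
        intro x hx
        obtain ⟨hx1, hx2⟩ := hx
        rw [← ht] at hx1
        rw [← hρ] at hx2
        have hxt : t ≤ ‖x‖ := hx1
        have hxpos : 0 < ‖x‖ := lt_of_lt_of_le htpos hxt
        have hjx : 0 ≤ j ‖x‖ := hnonneg _ hxpos
        have hjle : j ‖x‖ ≤ j t := hmono (Set.mem_Ioi.mpr htpos) (Set.mem_Ioi.mpr hxpos) hxt
        apply ENNReal.ofReal_le_ofReal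
        have hx2' : ‖x‖ ^ 2 ≤ ρ ^ 2 := by nlinarith [norm_nonneg x]
        nlinarith
      have step2 : volume (S k) ≤ ENNReal.ofReal (ρ ^ d) * V := by
        have hsub : S k ⊆ Metric.ball (0 : EuclideanSpace ℝ (Fin d)) ρ := by
          intro x hx
          rw [mem_ball_zero_iff, ← hρ] at *
          exact hx.2
        calc volume (S k) ≤ volume (Metric.ball (0 : EuclideanSpace ℝ (Fin d)) ρ) :=
              measure_mono hsub
          _ = ENNReal.ofReal (ρ ^ d) * V := by
              rw [hVdef, Measure.addHaar_ball volume _ hρpos.le, finrank_euclideanSpace_fin]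
      -- real-number key estimate
      have hc0' : c ≠ 0 := hc.ne'
      have h5 : c * (r / t) ^ α * (t ^ (d + 2) * j t) ≤ X :=
        hscale t r (le_trans hR₂R htR₂) htr
      have huv : (r / t) ^ α * (t / r) ^ α = 1 := by
        rw [← Real.mul_rpow (by positivity) (by positivity),
          show r / t * (t / r) = 1 by field_simp, Real.one_rpow]
      have hid : (t / r) ^ α / c * (c * (r / t) ^ α * (t ^ (d + 2) * j t))
          = t ^ (d + 2) * j t := by
        rw [show (t / r) ^ α / c * (c * (r / t) ^ α * (t ^ (d + 2) * j t))
            = (r / t) ^ α * (t / r) ^ α * (c / c) * (t ^ (d + 2) * j t) by ring,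
          huv, div_self hc0', one_mul, one_mul]
      have h6 : t ^ (d + 2) * j t ≤ (t / r) ^ α * (X / c) := by
        have hv0 : (0:ℝ) ≤ (t / r) ^ α / c := by positivity
        calc t ^ (d + 2) * j t
            = (t / r) ^ α / c * (c * (r / t) ^ α * (t ^ (d + 2) * j t)) := hid.symm
          _ ≤ (t / r) ^ α / c * X := mul_le_mul_of_nonneg_left h5 hv0
          _ = (t / r) ^ α * (X / c) := by ring
      have h7 : (t / r) ^ α ≤ q ^ k := by
        have h71 : t / r ≤ (2:ℝ)⁻¹ ^ k := by
          rw [div_le_iff₀ hrpos]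
          calc t ≤ ρ := htρ.le
            _ = (2:ℝ)⁻¹ ^ k * r := by rw [hρ]; ring
        calc (t / r) ^ α ≤ ((2:ℝ)⁻¹ ^ k) ^ α :=
              Real.rpow_le_rpow (by positivity) h71 hα.le
          _ = q ^ k := by
              rw [← Real.rpow_natCast ((2:ℝ)⁻¹) k, ← Real.rpow_mul (by norm_num),
                mul_comm ((k:ℕ):ℝ) α, Real.rpow_mul (by norm_num), Real.rpow_natCast]
      have key : ρ ^ (d + 2) * j t ≤ 2 ^ (d + 2) / c * X * q ^ k := by
        have hρpow : ρ ^ (d + 2) ≤ 2 ^ (d + 2) * t ^ (d + 2) := by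
          calc ρ ^ (d + 2) ≤ (2 * t) ^ (d + 2) := pow_le_pow_left₀ hρpos.le hρ2t _
            _ = 2 ^ (d + 2) * t ^ (d + 2) := mul_pow _ _ _
        have hXc : 0 ≤ X / c := div_nonneg hX0 hc.le
        calc ρ ^ (d + 2) * j t ≤ 2 ^ (d + 2) * t ^ (d + 2) * j t :=
              mul_le_mul_of_nonneg_right hρpow hjt
          _ = 2 ^ (d + 2) * (t ^ (d + 2) * j t) := by ring
          _ ≤ 2 ^ (d + 2) * ((t / r) ^ α * (X / c)) :=
              mul_le_mul_of_nonneg_left h6 (by positivity)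
          _ ≤ 2 ^ (d + 2) * (q ^ k * (X / c)) := by
              apply mul_le_mul_of_nonneg_left _ (by positivity)
              exact mul_le_mul_of_nonneg_right h7 hXc
          _ = 2 ^ (d + 2) / c * X * q ^ k := by ring
      calc (∫⁻ x in S k, ENNReal.ofReal (‖x‖ ^ 2 * j ‖x‖))
          ≤ ENNReal.ofReal (ρ ^ 2 * j t) * volume (S k) := step1
        _ ≤ ENNReal.ofReal (ρ ^ 2 * j t) * (ENNReal.ofReal (ρ ^ d) * V) :=
            mul_le_mul_right step2 _
        _ = ENNReal.ofReal (ρ ^ (d + 2) * j t) * V := by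
            rw [← mul_assoc, ← ENNReal.ofReal_mul (mul_nonneg (by positivity) hjt)]
            congr 2
            rw [pow_add]; ring
        _ ≤ ENNReal.ofReal (2 ^ (d + 2) / c * X * q ^ k) * V :=
            mul_le_mul_left (ENNReal.ofReal_le_ofReal key) _
        _ = ENNReal.ofReal (2 ^ (d + 2) / c * X) * ENNReal.ofReal q ^ k * V := by
            rw [ENNReal.ofReal_mul (mul_nonneg (div_nonneg (by positivity) hc.le) hX0),
              ENNReal.ofReal_pow hq0.le]
  have hann : (∫⁻ x in A, ENNReal.ofReal (‖x‖ ^ 2 * j ‖x‖)) ≤ ENNReal.ofReal (C₂ * X) := by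
    have hM0 : (0:ℝ) ≤ 2 ^ (d + 2) / c * X := mul_nonneg (div_nonneg (by positivity) hc.le) hX0
    calc (∫⁻ x in A, ENNReal.ofReal (‖x‖ ^ 2 * j ‖x‖))
        ≤ ∫⁻ x in ⋃ k, S k, ENNReal.ofReal (‖x‖ ^ 2 * j ‖x‖) := lintegral_mono_set hcover
      _ ≤ ∑' k, ∫⁻ x in S k, ENNReal.ofReal (‖x‖ ^ 2 * j ‖x‖) := lintegral_iUnion_le _ _
      _ ≤ ∑' k, ENNReal.ofReal (2 ^ (d + 2) / c * X) * ENNReal.ofReal q ^ k * V :=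
          ENNReal.tsum_le_tsum hterm
      _ = ∑' k, ENNReal.ofReal (2 ^ (d + 2) / c * X) * V * ENNReal.ofReal q ^ k :=
          tsum_congr (fun k => by ring)
      _ = ENNReal.ofReal (2 ^ (d + 2) / c * X) * V * ∑' k, ENNReal.ofReal q ^ k :=
          ENNReal.tsum_mul_left
      _ = ENNReal.ofReal (2 ^ (d + 2) / c * X) * V * (1 - ENNReal.ofReal q)⁻¹ := by
          rw [ENNReal.tsum_geometric]
      _ = ENNReal.ofReal (2 ^ (d + 2) / c * X) * ENNReal.ofReal V.toReal *
            ENNReal.ofReal (1 - q)⁻¹ := by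
          rw [ENNReal.ofReal_toReal hVlt.ne]
          congr 1
          rw [ENNReal.ofReal_inv_of_pos (by linarith), ENNReal.ofReal_sub _ hq0.le,
            ENNReal.ofReal_one]
      _ = ENNReal.ofReal (C₂ * X) := by
          rw [← ENNReal.ofReal_mul hM0,
            ← ENNReal.ofReal_mul (mul_nonneg hM0 ENNReal.toReal_nonneg)]
          congr 1
          rw [hC₂def]; ring
  -- combine
  have hsplit : Metric.ball (0 : EuclideanSpace ℝ (Fin d)) r ⊆
      Metric.ball (0 : EuclideanSpace ℝ (Fin d)) R₂ ∪ A := by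
    intro x hx
    rcases lt_or_ge ‖x‖ R₂ with h | h
    · exact Or.inl (mem_ball_zero_iff.mpr h)
    · exact Or.inr ⟨h, hx⟩
  calc m2 d j r
      ≤ ∫⁻ x in Metric.ball (0 : EuclideanSpace ℝ (Fin d)) R₂ ∪ A,
          ENNReal.ofReal (‖x‖ ^ 2 * j ‖x‖) := lintegral_mono_set hsplit
    _ ≤ (∫⁻ x in Metric.ball (0 : EuclideanSpace ℝ (Fin d)) R₂,
          ENNReal.ofReal (‖x‖ ^ 2 * j ‖x‖)) +
        ∫⁻ x in A, ENNReal.ofReal (‖x‖ ^ 2 * j ‖x‖) := lintegral_union_le _ _ _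
    _ ≤ ENNReal.ofReal (C₁ * X) + ENNReal.ofReal (C₂ * X) := add_le_add hinner hann
    _ = ENNReal.ofReal (C₁ * X + C₂ * X) :=
        (ENNReal.ofReal_add (mul_nonneg hC₁0 hX0) (mul_nonneg hC₂0 hX0)).symm
    _ ≤ ENNReal.ofReal ((C₁ + C₂ + 1) * X) := ENNReal.ofReal_le_ofReal (by nlinarith)
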